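/- Let (u_n) be a weak greedy sequence in 𝒦 with weakness parameter γ ∈ (0,1], and suppose there exist C > 0, c > 0 and 0 < α ≤ 1 such that d_n(𝒦)_H ≤ C e^{−c n^{α}} for all n ≥ 1. Then there exist constants C' > 0 and c̃ > 0 (depending only on C, c, α, γ) such that σ_n(𝒦)_H ≤ C' e^{−c̃ n^{α̃}} for all n ≥ 1, where α̃ := α/(1+α). -/

import Mathlib

open Metric

variable {H : Type*} [NormedAddCommGroup H] [InnerProductSpace ℝ H] [CompleteSpace H]

/-- `greedySpace u n = H_n := span{u_1, …, u_n}` (with `u i` denoting `u_{i+1}`). -/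
noncomputable def greedySpace (u : ℕ → H) (n : ℕ) : Submodule ℝ H :=
  Submodule.span ℝ (u '' {i | i < n})

/-- Greedy error `σ_n(𝒦)_H := sup_{v∈𝒦} dist(v, H_n)`. -/
noncomputable def greedyErr (K : Set H) (u : ℕ → H) (n : ℕ) : ℝ :=
  ⨆ v : K, infDist (v : H) (greedySpace u n : Set H)

/-- A weak greedy sequence in `𝒦` with weakness parameter `γ`:
`dist(u_{n+1}, H_n) ≥ γ · sup_{v∈𝒦} dist(v, H_n)` for all `n ≥ 0`. -/
def IsWeakGreedy (K : Set H) (u : ℕ → H) (γ : ℝ) : Prop :=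
  (∀ n, u n ∈ K) ∧
    ∀ n, γ * greedyErr K u n ≤ infDist (u n) (greedySpace u n : Set H)

/-- Kolmogorov `n`-width
`d_n(𝒦)_H := inf {sup_{v∈𝒦} dist(v, V) : V ⊂ H subspace, dim V ≤ n}`. -/
noncomputable def kolWidth (K : Set H) (n : ℕ) : ℝ :=
  ⨅ V : {V : Submodule ℝ H // FiniteDimensional ℝ V ∧ Module.finrank ℝ V ≤ n},
    ⨆ v : K, infDist (v : H) ((V : Submodule ℝ H) : Set H)

set_option linter.unusedSectionVars false

open InnerProductSpace

instance greedySpace_fd (u : ℕ → H) (n : ℕ) : FiniteDimensional ℝ (greedySpace u n) := by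
  apply FiniteDimensional.span_of_finite
  exact (Set.finite_Iio n).image u

example (u : ℕ → H) (n : ℕ) : Submodule.HasOrthogonalProjection (greedySpace u n) := inferInstance

lemma greedySpace_mono (u : ℕ → H) {n p : ℕ} (h : n ≤ p) :
    (greedySpace u n : Set H) ⊆ (greedySpace u p : Set H) := by
  apply Submodule.span_mono
  exact Set.image_mono (fun i hi => lt_of_lt_of_le hi h)

lemma gs_sub_mem (u : ℕ → H) (k : ℕ) : u k - gramSchmidt ℝ u k ∈ greedySpace u k := by
  have h := gramSchmidt_def' ℝ u k
  have : u k - gramSchmidt ℝ u k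
      = ∑ i ∈ Finset.Iio k, (Submodule.orthogonalProjectionOnto (ℝ ∙ gramSchmidt ℝ u i) (u k) : H) := by
    conv_lhs => rw [h]
    abel
  rw [this]
  apply Submodule.sum_mem
  intro i hi
  have hmem : (Submodule.orthogonalProjectionOnto (ℝ ∙ gramSchmidt ℝ u i) (u k) : H) ∈ ℝ ∙ gramSchmidt ℝ u i :=
    Submodule.coe_mem _
  have hle : (ℝ ∙ gramSchmidt ℝ u i) ≤ greedySpace u k := by
    have h1 : gramSchmidt ℝ u i ∈ Submodule.span ℝ (gramSchmidt ℝ u '' Set.Iio k) :=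
      Submodule.subset_span ⟨i, Finset.mem_Iio.1 hi, rfl⟩
    rw [span_gramSchmidt_Iio ℝ u k] at h1
    rwa [Submodule.span_singleton_le_iff_mem]
  exact hle hmem

lemma gs_perp (u : ℕ → H) (k : ℕ) : gramSchmidt ℝ u k ∈ (greedySpace u k)ᗮ := by
  have : greedySpace u k = Submodule.span ℝ (gramSchmidt ℝ u '' Set.Iio k) :=
    (span_gramSchmidt_Iio ℝ u k).symm
  rw [this, Submodule.mem_orthogonal]
  intro w hw
  induction hw using Submodule.span_induction with
  | mem x hx =>
      obtain ⟨i, hi, rfl⟩ := hx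
      have : i ≠ k := ne_of_lt hi
      exact gramSchmidt_orthogonal ℝ u this
  | zero => simp
  | add x y _ _ hx hy => rw [inner_add_left, hx, hy]; ring
  | smul c x _ hx => rw [inner_smul_left, hx]; ring

set_option linter.unusedSectionVars false

-- `infDist` to a submodule with orthogonal projection
lemma infDist_eq_norm_sub_proj (M : Submodule ℝ H) [Submodule.HasOrthogonalProjection M] (x : H) :
    infDist x (M : Set H) = ‖x - (Submodule.orthogonalProjectionOnto M x : H)‖ := by
  rw [infDist_eq_iInf, ← Submodule.starProjection_apply, Submodule.starProjection_minimal]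
  congr 1
  ext y
  exact dist_eq_norm x (y : H)

lemma norm_sub_proj_le (M : Submodule ℝ H) [Submodule.HasOrthogonalProjection M] (x : H) :
    ‖x - (Submodule.orthogonalProjectionOnto M x : H)‖ ≤ ‖x‖ := by
  rw [← infDist_eq_norm_sub_proj]
  have h0 : (0 : H) ∈ (M : Set H) := M.zero_mem
  calc infDist x (M : Set H) ≤ dist x 0 := infDist_le_dist_of_mem h0
  _ = ‖x‖ := by simp [dist_eq_norm]

lemma infDist_le_norm_of_zero_mem (M : Submodule ℝ H) (x : H) :
    infDist x (M : Set H) ≤ ‖x‖ := by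
  have h0 : (0 : H) ∈ (M : Set H) := M.zero_mem
  calc infDist x (M : Set H) ≤ dist x 0 := infDist_le_dist_of_mem h0
  _ = ‖x‖ := by simp [dist_eq_norm]

lemma proj_gs_eq (u : ℕ → H) (k : ℕ) :
    (Submodule.orthogonalProjectionOnto (greedySpace u k) (u k) : H) = u k - gramSchmidt ℝ u k := by
  apply Submodule.eq_starProjection_of_mem_of_inner_eq_zero (gs_sub_mem u k)
  intro w hw
  have h1 : u k - (u k - gramSchmidt ℝ u k) = gramSchmidt ℝ u k := by abel
  rw [h1]
  exact (Submodule.mem_orthogonal' _ _).1 (gs_perp u k) w hw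

lemma norm_gs_eq_infDist (u : ℕ → H) (k : ℕ) :
    ‖gramSchmidt ℝ u k‖ = infDist (u k) (greedySpace u k : Set H) := by
  rw [infDist_eq_norm_sub_proj, proj_gs_eq]
  congr 1
  abel

lemma inner_gs_self (u : ℕ → H) (k : ℕ) :
    (inner ℝ (u k) (gramSchmidt ℝ u k) : ℝ) = ‖gramSchmidt ℝ u k‖ ^ 2 := by
  have h : u k = (u k - gramSchmidt ℝ u k) + gramSchmidt ℝ u k := by abel
  rw [h, inner_add_left]
  have hz : (inner ℝ (u k - gramSchmidt ℝ u k) (gramSchmidt ℝ u k) : ℝ) = 0 :=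
    (Submodule.mem_orthogonal _ _).1 (gs_perp u k) _ (gs_sub_mem u k)
  rw [hz, real_inner_self_eq_norm_sq]
  ring

-- greedyErr / kolWidth basics
lemma bddAbove_infDist_range (K : Set H) (R : ℝ) (hR : ∀ x ∈ K, ‖x‖ ≤ R)
    (M : Submodule ℝ H) :
    BddAbove (Set.range fun v : K => infDist (v : H) (M : Set H)) := by
  refine ⟨R, ?_⟩
  rintro _ ⟨⟨v, hv⟩, rfl⟩
  exact le_trans (infDist_le_norm_of_zero_mem M v) (hR v hv)

lemma greedyErr_nonneg (K : Set H) (u : ℕ → H) (n : ℕ) : 0 ≤ greedyErr K u n :=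
  Real.iSup_nonneg fun _ => infDist_nonneg

lemma infDist_le_greedyErr (K : Set H) (u : ℕ → H) (R : ℝ) (hR : ∀ x ∈ K, ‖x‖ ≤ R)
    {x : H} (hx : x ∈ K) (n : ℕ) :
    infDist x (greedySpace u n : Set H) ≤ greedyErr K u n :=
  le_ciSup (bddAbove_infDist_range K R hR _) (⟨x, hx⟩ : K)

lemma greedyErr_anti (K : Set H) (u : ℕ → H) (R : ℝ) (hR : ∀ x ∈ K, ‖x‖ ≤ R)
    (hne : K.Nonempty) {n p : ℕ} (h : n ≤ p) :
    greedyErr K u p ≤ greedyErr K u n := by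
  haveI : Nonempty K := hne.to_subtype
  refine ciSup_le fun v => ?_
  calc infDist (v : H) (greedySpace u p : Set H)
      ≤ infDist (v : H) (greedySpace u n : Set H) :=
        infDist_le_infDist_of_subset (greedySpace_mono u h) ⟨0, (greedySpace u n).zero_mem⟩
    _ ≤ greedyErr K u n := infDist_le_greedyErr K u R hR v.2 n

lemma kolWidth_nonneg (K : Set H) (m : ℕ) : 0 ≤ kolWidth K m := by
  haveI : Nonempty {V : Submodule ℝ H // FiniteDimensional ℝ V ∧ Module.finrank ℝ V ≤ m} :=
    ⟨⟨⊥, inferInstance, by simp⟩⟩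
  exact le_ciInf fun _ => Real.iSup_nonneg fun _ => infDist_nonneg

lemma exists_width_space (K : Set H) (R : ℝ) (hR : ∀ x ∈ K, ‖x‖ ≤ R) (m : ℕ) {ε : ℝ}
    (hε : 0 < ε) :
    ∃ V : Submodule ℝ H, FiniteDimensional ℝ V ∧ Module.finrank ℝ V ≤ m ∧
      ∀ x ∈ K, infDist x (V : Set H) ≤ kolWidth K m + ε := by
  haveI : Nonempty {V : Submodule ℝ H // FiniteDimensional ℝ V ∧ Module.finrank ℝ V ≤ m} :=
    ⟨⟨⊥, inferInstance, by simp⟩⟩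
  have hlt : kolWidth K m < kolWidth K m + ε := lt_add_of_pos_right _ hε
  obtain ⟨⟨V, hVfd, hVr⟩, hV⟩ := exists_lt_of_ciInf_lt hlt
  refine ⟨V, hVfd, hVr, fun x hx => ?_⟩
  exact le_trans (le_ciSup (bddAbove_infDist_range K R hR V) (⟨x, hx⟩ : K)) hV.le

/-- Core "Bessel/pigeonhole" inequality for the weak greedy algorithm. -/
lemma weakGreedy_core (K : Set H) (u : ℕ → H) (γ : ℝ) (hγ0 : 0 < γ)
    (hwg : IsWeakGreedy K u γ) (R : ℝ) (hR : ∀ x ∈ K, ‖x‖ ≤ R)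
    (n T m : ℕ) (hT : 1 ≤ T) (V : Submodule ℝ H) [FiniteDimensional ℝ V]
    (hVm : Module.finrank ℝ V ≤ m) (d ε : ℝ) (hd0 : 0 ≤ d) (hε : 0 < ε)
    (hVd : ∀ x ∈ K, infDist x (V : Set H) ≤ d) :
    γ * greedyErr K u (n + T) ≤
      (greedyErr K u n + (d + ε)) * Real.sqrt ((m : ℝ) / (T : ℝ)) + (d + ε) := by
  have hne : K.Nonempty := ⟨u 0, hwg.1 0⟩
  have hσn : 0 ≤ greedyErr K u n := greedyErr_nonneg K u n
  have hsqrt : 0 ≤ Real.sqrt ((m : ℝ) / (T : ℝ)) := Real.sqrt_nonneg _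
  by_cases hpos : greedyErr K u (n + T) ≤ 0
  · have h1 : γ * greedyErr K u (n + T) ≤ 0 := mul_nonpos_of_nonneg_of_nonpos hγ0.le hpos
    have h2 : 0 ≤ (greedyErr K u n + (d + ε)) * Real.sqrt ((m : ℝ) / (T : ℝ)) :=
      mul_nonneg (by linarith) hsqrt
    linarith
  push_neg at hpos
  set f := gramSchmidt ℝ u with hf
  -- lower bound for the Gram-Schmidt norms
  have hβk : ∀ i : ℕ, i < T → γ * greedyErr K u (n + T) ≤ ‖f (n + i)‖ := by
    intro i hi
    have h1 : greedyErr K u (n + T) ≤ greedyErr K u (n + i) :=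
      greedyErr_anti K u R hR hne (by omega)
    calc γ * greedyErr K u (n + T) ≤ γ * greedyErr K u (n + i) :=
          mul_le_mul_of_nonneg_left h1 hγ0.le
      _ ≤ infDist (u (n + i)) (greedySpace u (n + i) : Set H) := hwg.2 (n + i)
      _ = ‖f (n + i)‖ := (norm_gs_eq_infDist u (n + i)).symm
  have hfne : ∀ i : ℕ, i < T → f (n + i) ≠ 0 := by
    intro i hi h0
    have := hβk i hi
    rw [h0, norm_zero] at this
    nlinarith
  -- the orthonormal family
  set g : Fin T → H := fun i => ‖f (n + (i : ℕ))‖⁻¹ • f (n + (i : ℕ)) with hg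
  have hg_norm : ∀ i : Fin T, ‖g i‖ = 1 := fun i => norm_smul_inv_norm (hfne i i.2)
  have hg_on : Orthonormal ℝ g := by
    rw [orthonormal_iff_ite]
    intro i j
    by_cases hij : i = j
    · subst hij
      rw [if_pos rfl, real_inner_self_eq_norm_sq, hg_norm i]
      norm_num
    · rw [if_neg hij]
      have hij' : n + (i : ℕ) ≠ n + (j : ℕ) := by
        simp only [ne_eq, Nat.add_right_cancel_iff]
        exact fun h => hij (Fin.ext (Nat.add_left_cancel h))
      simp only [hg, real_inner_smul_left, real_inner_smul_right]
      rw [gramSchmidt_orthogonal ℝ u hij']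
      ring
  -- the "quotient" linear map and the comparison space
  set Hn := greedySpace u n with hHn
  set QL : H →ₗ[ℝ] H :=
    LinearMap.id - Hn.subtype ∘ₗ (Submodule.orthogonalProjectionOnto Hn).toLinearMap with hQLdef
  have hQLapply : ∀ x : H, QL x = x - (Submodule.orthogonalProjectionOnto Hn x : H) := fun x => rfl
  have hQLnorm : ∀ x : H, ‖QL x‖ ≤ ‖x‖ := by
    intro x; rw [hQLapply]; exact norm_sub_proj_le Hn x
  set W := V.map QL with hW
  haveI hWfd : FiniteDimensional ℝ W := inferInstance
  have hWm : Module.finrank ℝ W ≤ m := le_trans (Submodule.finrank_map_le QL V) hVm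
  -- Bessel bound
  set b := stdOrthonormalBasis ℝ W with hb
  have hPg_sq : ∀ i : Fin T, ‖(Submodule.orthogonalProjectionOnto W (g i) : H)‖ ^ 2 =
      ∑ j, (inner ℝ ((b j : H)) (g i) : ℝ) ^ 2 := by
    intro i
    have h1 : ‖(Submodule.orthogonalProjectionOnto W (g i) : H)‖ ^ 2 =
        (inner ℝ (g i) ((Submodule.orthogonalProjectionOnto W (g i) : H)) : ℝ) := by
      have h2 : (inner ℝ ((g i) - (Submodule.orthogonalProjectionOnto W (g i) : H))
          ((Submodule.orthogonalProjectionOnto W (g i) : H)) : ℝ) = 0 :=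
        Submodule.starProjection_inner_eq_zero (g i) _ (Submodule.coe_mem _)
      have h3 : (inner ℝ (g i) ((Submodule.orthogonalProjectionOnto W (g i) : H)) : ℝ) =
          (inner ℝ ((g i) - (Submodule.orthogonalProjectionOnto W (g i) : H))
            ((Submodule.orthogonalProjectionOnto W (g i) : H)) : ℝ) +
          (inner ℝ ((Submodule.orthogonalProjectionOnto W (g i) : H))
            ((Submodule.orthogonalProjectionOnto W (g i) : H)) : ℝ) := by
        rw [← inner_add_left]; congr 1; abel
      rw [h3, h2, zero_add, real_inner_self_eq_norm_sq]
    rw [h1, b.orthogonalProjectionOnto_apply_eq_sum (g i)]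
    push_cast [Submodule.coe_sum, Submodule.coe_smul, inner_sum, real_inner_smul_right]
    refine Finset.sum_congr rfl fun j _ => ?_
    rw [real_inner_comm (g i) ((b j : H))]
    ring
  have hBessel : ∑ i : Fin T, ‖(Submodule.orthogonalProjectionOnto W (g i) : H)‖ ^ 2 ≤ (m : ℝ) := by
    calc ∑ i : Fin T, ‖(Submodule.orthogonalProjectionOnto W (g i) : H)‖ ^ 2
        = ∑ i : Fin T, ∑ j, (inner ℝ ((b j : H)) (g i) : ℝ) ^ 2 :=
          Finset.sum_congr rfl fun i _ => hPg_sq i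
      _ = ∑ j, ∑ i : Fin T, (inner ℝ ((b j : H)) (g i) : ℝ) ^ 2 := Finset.sum_comm
      _ ≤ ∑ _j : Fin (Module.finrank ℝ W), (1 : ℝ) := by
          refine Finset.sum_le_sum fun j _ => ?_
          have hbj : ‖(b j : H)‖ = 1 := b.orthonormal.1 j
          have hB := hg_on.sum_inner_products_le (𝕜 := ℝ) ((b j : H)) (s := Finset.univ)
          simp only [Real.norm_eq_abs, sq_abs] at hB
          calc ∑ i : Fin T, (inner ℝ ((b j : H)) (g i) : ℝ) ^ 2
              = ∑ i : Fin T, (inner ℝ (g i) ((b j : H)) : ℝ) ^ 2 := by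
                refine Finset.sum_congr rfl fun i _ => ?_
                rw [real_inner_comm]
            _ ≤ ‖(b j : H)‖ ^ 2 := hB
            _ = 1 := by rw [hbj]; norm_num
      _ = (Module.finrank ℝ W : ℝ) := by simp
      _ ≤ (m : ℝ) := by exact_mod_cast hWm
  -- pigeonhole
  have hex : ∃ i : Fin T, ‖(Submodule.orthogonalProjectionOnto W (g i) : H)‖ ^ 2 ≤ (m : ℝ) / (T : ℝ) := by
    by_contra hcon
    push_neg at hcon
    haveI : Nonempty (Fin T) := ⟨⟨0, hT⟩⟩
    have hsum : ∑ _i : Fin T, (m : ℝ) / (T : ℝ) <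
        ∑ i : Fin T, ‖(Submodule.orthogonalProjectionOnto W (g i) : H)‖ ^ 2 :=
      Finset.sum_lt_sum_of_nonempty Finset.univ_nonempty fun i _ => hcon i
    have hTn : (T : ℝ) ≠ 0 := by positivity
    rw [Finset.sum_const, Finset.card_univ, Fintype.card_fin, nsmul_eq_mul,
      mul_div_cancel₀ _ hTn] at hsum
    linarith
  obtain ⟨i, hi⟩ := hex
  have hPg_le : ‖(Submodule.orthogonalProjectionOnto W (g i) : H)‖ ≤ Real.sqrt ((m : ℝ) / (T : ℝ)) := by
    rw [← Real.sqrt_sq (norm_nonneg (((Submodule.orthogonalProjectionOnto W (g i)) : H)))]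
    exact Real.sqrt_le_sqrt hi
  set k := n + (i : ℕ) with hk
  -- pick a good approximation from V
  obtain ⟨v, hvV, hv⟩ : ∃ y ∈ (V : Set H), dist (u k) y < d + ε := by
    rw [← infDist_lt_iff ⟨0, V.zero_mem⟩]
    exact lt_of_le_of_lt (hVd _ (hwg.1 k)) (lt_add_of_pos_right d hε)
  -- g i is orthogonal to Hn
  have hgi_perpHn : ∀ w ∈ Hn, (inner ℝ w (g i) : ℝ) = 0 := by
    intro w hw
    have hw' : w ∈ greedySpace u k := greedySpace_mono u (Nat.le_add_right n i) hw
    have h0 : (inner ℝ w (f k) : ℝ) = 0 :=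
      (Submodule.mem_orthogonal _ (f k)).1 (gs_perp u k) w hw'
    simp only [hg, real_inner_smul_right]
    rw [h0]; ring
  -- main lower bound
  have h_main : γ * greedyErr K u (n + T) ≤ (inner ℝ (u k) (g i) : ℝ) := by
    have h1 : (inner ℝ (u k) (g i) : ℝ) = ‖f k‖ := by
      simp only [hg, real_inner_smul_right]
      rw [inner_gs_self u k]
      have hfk : ‖f k‖ ≠ 0 := norm_ne_zero_iff.2 (hfne i i.2)
      change ‖f k‖⁻¹ * ‖f k‖ ^ 2 = ‖f k‖
      rw [pow_two, ← mul_assoc, inv_mul_cancel₀ hfk, one_mul]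
    rw [h1]
    exact hβk i i.2
  -- upper bound
  set y := QL (u k) with hy
  have h_uk_g : (inner ℝ (u k) (g i) : ℝ) = (inner ℝ y (g i) : ℝ) := by
    have hdecomp : u k = y + (Submodule.orthogonalProjectionOnto Hn (u k) : H) := by
      rw [hy, hQLapply]; abel
    rw [hdecomp, inner_add_left, hgi_perpHn _ (Submodule.coe_mem _), add_zero]
  set w := QL v with hwdef
  have hwW : w ∈ W := Submodule.mem_map_of_mem hvV
  have hyw : ‖y - w‖ ≤ d + ε := by
    have : y - w = QL (u k - v) := by rw [hy, hwdef, map_sub]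
    rw [this]
    calc ‖QL (u k - v)‖ ≤ ‖u k - v‖ := hQLnorm _
      _ = dist (u k) v := (dist_eq_norm _ _).symm
      _ ≤ d + ε := hv.le
  have hny : ‖y‖ ≤ greedyErr K u n := by
    rw [hy, hQLapply, ← infDist_eq_norm_sub_proj]
    exact infDist_le_greedyErr K u R hR (hwg.1 k) n
  have hnw : ‖w‖ ≤ greedyErr K u n + (d + ε) := by
    calc ‖w‖ = ‖y - (y - w)‖ := by congr 1; abel
      _ ≤ ‖y‖ + ‖y - w‖ := norm_sub_le _ _
      _ ≤ greedyErr K u n + (d + ε) := add_le_add hny hyw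
  have hinner_w : (inner ℝ w (g i) : ℝ) ≤ ‖w‖ * Real.sqrt ((m : ℝ) / (T : ℝ)) := by
    have h2 : (inner ℝ w (g i) : ℝ) = (inner ℝ w ((Submodule.orthogonalProjectionOnto W (g i) : H)) : ℝ) := by
      have h3 : (inner ℝ ((g i) - (Submodule.orthogonalProjectionOnto W (g i) : H)) w : ℝ) = 0 :=
        Submodule.starProjection_inner_eq_zero (g i) w hwW
      have h4 : (inner ℝ w ((g i) - (Submodule.orthogonalProjectionOnto W (g i) : H)) : ℝ) = 0 := by
        rw [real_inner_comm]; exact h3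
      rw [inner_sub_right] at h4
      linarith
    rw [h2]
    calc (inner ℝ w ((Submodule.orthogonalProjectionOnto W (g i) : H)) : ℝ)
        ≤ ‖w‖ * ‖(Submodule.orthogonalProjectionOnto W (g i) : H)‖ := real_inner_le_norm _ _
      _ ≤ ‖w‖ * Real.sqrt ((m : ℝ) / (T : ℝ)) :=
          mul_le_mul_of_nonneg_left hPg_le (norm_nonneg _)
  have hyg : (inner ℝ y (g i) : ℝ) ≤ (d + ε) + (‖w‖ * Real.sqrt ((m : ℝ) / (T : ℝ))) := by
    have hsplit : (inner ℝ y (g i) : ℝ) = (inner ℝ (y - w) (g i) : ℝ) + (inner ℝ w (g i) : ℝ) := by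
      rw [← inner_add_left]; congr 1; abel
    have h5 : (inner ℝ (y - w) (g i) : ℝ) ≤ ‖y - w‖ * ‖g i‖ := real_inner_le_norm _ _
    rw [hg_norm i, mul_one] at h5
    linarith
  have hfinal : ‖w‖ * Real.sqrt ((m : ℝ) / (T : ℝ)) ≤
      (greedyErr K u n + (d + ε)) * Real.sqrt ((m : ℝ) / (T : ℝ)) :=
    mul_le_mul_of_nonneg_right hnw hsqrt
  rw [h_uk_g] at h_main
  linarith

lemma width_step (K : Set H) (u : ℕ → H) (γ : ℝ) (hγ0 : 0 < γ)
    (hwg : IsWeakGreedy K u γ) (R : ℝ) (hR : ∀ x ∈ K, ‖x‖ ≤ R)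
    (n T m : ℕ) (hT : 1 ≤ T) :
    γ * greedyErr K u (n + T) ≤
      (greedyErr K u n + kolWidth K m) * Real.sqrt ((m : ℝ) / (T : ℝ)) + kolWidth K m := by
  set D := kolWidth K m with hD
  set s := Real.sqrt ((m : ℝ) / (T : ℝ)) with hs
  have hs0 : 0 ≤ s := Real.sqrt_nonneg _
  have hD0 : 0 ≤ D := kolWidth_nonneg K m
  have key : ∀ ε : ℝ, 0 < ε →
      γ * greedyErr K u (n + T) ≤ (greedyErr K u n + D + ε) * s + (D + ε) := by
    intro ε hε
    obtain ⟨V, hfd, hrk, hVd⟩ := exists_width_space K R hR m (half_pos hε)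
    haveI := hfd
    have hcore := weakGreedy_core K u γ hγ0 hwg R hR n T m hT V hrk
      (D + ε / 2) (ε / 2) (by linarith) (half_pos hε) hVd
    have h2 : (greedyErr K u n + (D + ε / 2 + ε / 2)) * s + (D + ε / 2 + ε / 2)
        = (greedyErr K u n + D + ε) * s + (D + ε) := by ring
    rw [← hs, h2] at hcore
    exact hcore
  by_contra hcon
  push_neg at hcon
  set δ := γ * greedyErr K u (n + T) - ((greedyErr K u n + D) * s + D) with hδ
  have hδpos : 0 < δ := by simp only [hδ]; linarith
  have hs1 : (0:ℝ) < s + 1 := by linarith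
  have hkey := key (δ / (2 * (s + 1))) (by positivity)
  have hmul : δ / (2 * (s + 1)) * (s + 1) = δ / 2 := by
    field_simp
  have hexp : (greedyErr K u n + D + δ / (2 * (s + 1))) * s + (D + δ / (2 * (s + 1)))
      = ((greedyErr K u n + D) * s + D) + δ / (2 * (s + 1)) * (s + 1) := by ring
  rw [hexp, hmul] at hkey
  simp only [hδ] at hkey
  linarith

lemma greedy_iterate (K : Set H) (u : ℕ → H) (γ : ℝ) (hγ0 : 0 < γ) (hγ1 : γ ≤ 1)
    (hwg : IsWeakGreedy K u γ) (R : ℝ) (hR : ∀ x ∈ K, ‖x‖ ≤ R)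
    (L mq : ℕ) (hL4 : (4:ℝ) / γ ^ 2 ≤ (L : ℝ)) (hm : 1 ≤ mq) :
    ∀ j : ℕ, greedyErr K u (j * (L * mq)) ≤
      (2:ℝ)⁻¹ ^ j * greedyErr K u 0 + 4 * kolWidth K mq / γ := by
  have hne : K.Nonempty := ⟨u 0, hwg.1 0⟩
  have hγ2 : (0:ℝ) < γ ^ 2 := by positivity
  have hLpos : (0:ℝ) < (L : ℝ) := lt_of_lt_of_le (by positivity) hL4
  have hL1 : 1 ≤ L := by exact_mod_cast Nat.one_le_cast.2 (by exact_mod_cast Nat.cast_pos.1 hLpos)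
  have hD0 : 0 ≤ kolWidth K mq := kolWidth_nonneg K mq
  have hT1 : 1 ≤ L * mq := le_trans (by norm_num) (Nat.mul_le_mul hL1 hm)
  have hmpos : (0:ℝ) < (mq : ℝ) := by exact_mod_cast hm
  have hsq : Real.sqrt ((mq : ℝ) / ((L * mq : ℕ) : ℝ)) ≤ γ / 2 := by
    have he1 : ((mq : ℝ)) / ((L * mq : ℕ) : ℝ) = 1 / (L : ℝ) := by
      push_cast
      field_simp
    rw [he1]
    have he2 : (1:ℝ) / (L : ℝ) ≤ γ ^ 2 / 4 := by
      rw [div_le_div_iff₀ hLpos (by norm_num)]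
      have h4 : (4:ℝ) ≤ (L:ℝ) * γ ^ 2 := by
        have := (div_le_iff₀ hγ2).1 hL4
        linarith
      linarith
    calc Real.sqrt (1 / (L:ℝ)) ≤ Real.sqrt (γ ^ 2 / 4) := Real.sqrt_le_sqrt he2
      _ = γ / 2 := by
          rw [show γ ^ 2 / 4 = (γ / 2) ^ 2 by ring, Real.sqrt_sq (by positivity)]
  intro j
  induction j with
  | zero =>
      simp only [Nat.zero_mul, pow_zero, one_mul]
      have : 0 ≤ 4 * kolWidth K mq / γ := by positivity
      linarith
  | succ j ih =>
      have hstep := width_step K u γ hγ0 hwg R hR (j * (L * mq)) (L * mq) mq hT1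
      have hidx : j * (L * mq) + L * mq = (j + 1) * (L * mq) := by ring
      rw [hidx] at hstep
      set D := kolWidth K mq with hD
      set σj := greedyErr K u (j * (L * mq)) with hσj
      have hσj0 : 0 ≤ σj := greedyErr_nonneg K u _
      have hs_le : (σj + D) * Real.sqrt ((mq : ℝ) / ((L * mq : ℕ) : ℝ)) ≤ (σj + D) * (γ / 2) :=
        mul_le_mul_of_nonneg_left hsq (by linarith)
      have h5 : γ * greedyErr K u ((j + 1) * (L * mq)) ≤ (σj + D) * (γ / 2) + D := by
        linarith
      have h7 : greedyErr K u ((j + 1) * (L * mq)) ≤ ((σj + D) * (γ / 2) + D) / γ := by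
        rw [le_div_iff₀ hγ0]
        linarith
      have h8 : ((σj + D) * (γ / 2) + D) / γ = σj / 2 + D / 2 + D / γ := by
        field_simp
      have h9 : D / 2 ≤ D / γ := div_le_div_of_nonneg_left hD0 hγ0 (by linarith)
      have h10 : greedyErr K u ((j + 1) * (L * mq)) ≤ σj / 2 + 2 * D / γ := by
        rw [h8] at h7
        have : D / γ + D / γ = 2 * D / γ := by ring
        linarith
      have h11 : (2:ℝ)⁻¹ ^ (j + 1) * greedyErr K u 0 = ((2:ℝ)⁻¹ ^ j * greedyErr K u 0) / 2 := by
        rw [pow_succ]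
        ring
      rw [h11]
      have hq : 4 * D / γ = 2 * (2 * D / γ) := by ring
      linarith

set_option maxHeartbeats 1000000 in
theorem weakGreedy_subexponential_rate'
    (K : Set H) (hK : IsCompact K) (u : ℕ → H) (γ : ℝ)
    (hγ0 : 0 < γ) (hγ1 : γ ≤ 1) (hwg : IsWeakGreedy K u γ)
    (C c α : ℝ) (hC : 0 < C) (hc : 0 < c) (hα0 : 0 < α) (hα1 : α ≤ 1)
    (hd : ∀ n : ℕ, 1 ≤ n → kolWidth K n ≤ C * Real.exp (-c * (n : ℝ) ^ α)) :
    ∃ C' > (0 : ℝ), ∃ ctil > (0 : ℝ), ∀ n : ℕ, 1 ≤ n →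
      greedyErr K u n ≤ C' * Real.exp (-ctil * (n : ℝ) ^ (α / (1 + α))) := by
  obtain ⟨R, hR⟩ := hK.isBounded.exists_norm_le
  have hne : K.Nonempty := ⟨u 0, hwg.1 0⟩
  set σ0 := greedyErr K u 0 with hσ0def
  have hσ00 : 0 ≤ σ0 := greedyErr_nonneg K u 0
  -- the block-length multiplier
  set L : ℕ := ⌈(4:ℝ) / γ ^ 2⌉₊ with hLdef
  have hL4 : (4:ℝ) / γ ^ 2 ≤ (L : ℝ) := Nat.le_ceil _
  have hγ2 : (0:ℝ) < γ ^ 2 := by positivity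
  have hLpos : (0:ℝ) < (L : ℝ) := lt_of_lt_of_le (by positivity) hL4
  have hlog2 : (0:ℝ) < Real.log 2 := Real.log_pos (by norm_num)
  set ctil : ℝ := min c (Real.log 2 / (2 * (L : ℝ))) with hctil
  have hctil0 : 0 < ctil := lt_min hc (by positivity)
  set C' : ℝ := 2 * σ0 + 4 * C / γ + 1 with hC'
  have hC'0 : 0 < C' := by positivity
  refine ⟨C', hC'0, ctil, hctil0, fun n hn => ?_⟩
  -- choose parameters
  have hα1' : (0:ℝ) < 1 + α := by linarith
  set e : ℝ := 1 / (1 + α) with he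
  have he0 : 0 < e := by positivity
  set x : ℝ := (n : ℝ) ^ e with hx
  have hn1 : (1:ℝ) ≤ (n : ℝ) := by exact_mod_cast hn
  have hnpos : (0:ℝ) < (n : ℝ) := by linarith
  have hx1 : 1 ≤ x := by
    rw [hx, ← Real.one_rpow e]
    exact Real.rpow_le_rpow (by norm_num) hn1 he0.le
  have hxpos : 0 < x := by linarith
  set m : ℕ := ⌈x⌉₊ with hm
  have hm1 : 1 ≤ m := Nat.one_le_iff_ne_zero.2 (by
    have : 0 < m := Nat.ceil_pos.2 hxpos
    omega)
  have hmx : x ≤ (m : ℝ) := Nat.le_ceil x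
  have hm2x : (m : ℝ) ≤ 2 * x := by
    have := Nat.ceil_lt_add_one hxpos.le
    have h2 : (m : ℝ) < x + 1 := this
    linarith
  set b : ℕ := L * m with hb
  have hbpos : 0 < b := by
    have hL1 : 1 ≤ L := by exact_mod_cast Nat.one_le_cast.2 (by exact_mod_cast Nat.cast_pos.1 hLpos)
    exact Nat.mul_pos hL1 hm1
  set j : ℕ := n / b with hj
  -- apply the iteration
  have hiter := greedy_iterate K u γ hγ0 hγ1 hwg R hR L m hL4 hm1 j
  have hjb : j * b ≤ n := Nat.div_mul_le_self n b
  have hmono : greedyErr K u n ≤ greedyErr K u (j * b) :=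
    greedyErr_anti K u R hR hne hjb
  have hmain : greedyErr K u n ≤ (2:ℝ)⁻¹ ^ j * σ0 + 4 * kolWidth K m / γ :=
    le_trans hmono hiter
  -- the target quantity
  set A : ℝ := (n : ℝ) ^ (α / (1 + α)) with hA
  have hA0 : 0 ≤ A := Real.rpow_nonneg hnpos.le _
  -- width bound : kolWidth K m ≤ C exp (-c A)
  have hwidth : kolWidth K m ≤ C * Real.exp (-ctil * A) := by
    have h1 := hd m hm1
    have h2 : A ≤ (m : ℝ) ^ α := by
      have h3 : x ^ α ≤ (m : ℝ) ^ α := Real.rpow_le_rpow hxpos.le hmx hα0.le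
      have h4 : x ^ α = A := by
        rw [hx, hA, ← Real.rpow_mul hnpos.le]
        congr 1
        rw [he]
        ring
      exact h4 ▸ h3
    have h5 : -c * (m : ℝ) ^ α ≤ -ctil * A := by
      have hctc : ctil ≤ c := min_le_left _ _
      nlinarith [hA0, h2]
    calc kolWidth K m ≤ C * Real.exp (-c * (m : ℝ) ^ α) := h1
      _ ≤ C * Real.exp (-ctil * A) := by
          have := Real.exp_le_exp.2 h5
          nlinarith [Real.exp_pos (-c * (m : ℝ) ^ α)]
  -- geometric decay bound : (1/2)^j ≤ 2 exp (-ctil A)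
  have hgeo : (2:ℝ)⁻¹ ^ j ≤ 2 * Real.exp (-ctil * A) := by
    -- A < 2L(j+1)
    have h9 : n < b * j + b := by
      have h92 : n % b < b := Nat.mod_lt n hbpos
      calc n = b * (n / b) + n % b := (Nat.div_add_mod n b).symm
        _ < b * (n / b) + b := Nat.add_lt_add_left h92 _
        _ = b * j + b := by rw [hj]
    have h9' : (n : ℝ) < (b : ℝ) * (j : ℝ) + (b : ℝ) := by exact_mod_cast h9
    have hble : (b : ℝ) ≤ 2 * (L : ℝ) * x := by
      rw [hb]
      push_cast
      nlinarith
    have hAx : A * x = (n : ℝ) := by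
      rw [hA, hx, ← Real.rpow_add hnpos]
      have : α / (1 + α) + e = 1 := by
        rw [he]
        field_simp
        ring
      rw [this, Real.rpow_one]
    have hj0 : (0:ℝ) ≤ (j : ℝ) := Nat.cast_nonneg j
    have hAlt : A < 2 * (L : ℝ) * ((j : ℝ) + 1) := by
      have h10 : (n : ℝ) < 2 * (L : ℝ) * x * ((j : ℝ) + 1) := by nlinarith
      rw [← hAx] at h10
      nlinarith
    -- convert powers to exponentials
    have hpow : (2:ℝ)⁻¹ ^ j = Real.exp (-((j:ℝ) * Real.log 2)) := by
      have hpw : Real.exp (-((j:ℝ) * Real.log 2)) = (2:ℝ)⁻¹ ^ j := by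
        rw [Real.exp_neg, Real.exp_nat_mul, Real.exp_log (by norm_num : (0:ℝ) < 2), inv_pow]
      exact hpw.symm
    rw [hpow]
    have h11 : -((j:ℝ) * Real.log 2) ≤ Real.log 2 + (-ctil * A) := by
      have hctl : ctil ≤ Real.log 2 / (2 * (L : ℝ)) := min_le_right _ _
      have h12 : ctil * A ≤ Real.log 2 / (2 * (L : ℝ)) * A :=
        mul_le_mul_of_nonneg_right hctl hA0
      have h13 : Real.log 2 / (2 * (L : ℝ)) * A ≤ ((j:ℝ) + 1) * Real.log 2 := by
        rw [div_mul_eq_mul_div, div_le_iff₀ (by positivity)]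
        nlinarith
      linarith
    calc Real.exp (-((j:ℝ) * Real.log 2)) ≤ Real.exp (Real.log 2 + (-ctil * A)) :=
          Real.exp_le_exp.2 h11
      _ = 2 * Real.exp (-ctil * A) := by
          rw [Real.exp_add, Real.exp_log (by norm_num : (0:ℝ) < 2)]
  -- put everything together
  have hexpA : (0:ℝ) < Real.exp (-ctil * A) := Real.exp_pos _
  calc greedyErr K u n ≤ (2:ℝ)⁻¹ ^ j * σ0 + 4 * kolWidth K m / γ := hmain
    _ ≤ (2 * Real.exp (-ctil * A)) * σ0 + 4 * (C * Real.exp (-ctil * A)) / γ := by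
        have hp1 : (2:ℝ)⁻¹ ^ j * σ0 ≤ (2 * Real.exp (-ctil * A)) * σ0 :=
          mul_le_mul_of_nonneg_right hgeo hσ00
        have hp2 : 4 * kolWidth K m / γ ≤ 4 * (C * Real.exp (-ctil * A)) / γ := by
          apply (div_le_div_iff_of_pos_right hγ0).2
          linarith [hwidth]
        linarith
    _ ≤ C' * Real.exp (-ctil * A) := by
        rw [hC']
        have : 4 * (C * Real.exp (-ctil * A)) / γ = (4 * C / γ) * Real.exp (-ctil * A) := by
          ring
        nlinarith [hexpA]


/-- sub-exponential decay `d_n(𝒦)_H ≤ C e^{-c n^α}` (`0 < α ≤ 1`) of the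
Kolmogorov widths implies a sub-exponential rate `σ_n(𝒦)_H ≤ C' e^{-c̃ n^{α̃}}` with
`α̃ = α/(1+α)` for the weak greedy errors. -/
theorem weakGreedy_subexponential_rate
    (K : Set H) (hK : IsCompact K) (u : ℕ → H) (γ : ℝ)
    (hγ0 : 0 < γ) (hγ1 : γ ≤ 1) (hwg : IsWeakGreedy K u γ)
    (C c α : ℝ) (hC : 0 < C) (hc : 0 < c) (hα0 : 0 < α) (hα1 : α ≤ 1)
    (hd : ∀ n : ℕ, 1 ≤ n → kolWidth K n ≤ C * Real.exp (-c * (n : ℝ) ^ α)) :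
    ∃ C' > (0 : ℝ), ∃ ctil > (0 : ℝ), ∀ n : ℕ, 1 ≤ n →
      greedyErr K u n ≤ C' * Real.exp (-ctil * (n : ℝ) ^ (α / (1 + α))) := by
  exact weakGreedy_subexponential_rate' K hK u γ hγ0 hγ1 hwg C c α hC hc hα0 hα1 hd
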